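/- Let m ≥ 1 and let η_1, …, η_m : ℤ → ℝ be sequences such that for every j with 1 ≤ j ≤ m the Δ-Wronskian W_j^Δ(η_1,…,η_j)(n) is nonzero for all n ∈ ℤ. Define T_0 = id and, inductively, φ_j := T_{j−1}(η_j) and T_j := T_d(φ_j)∘T_{j−1}. For 1 ≤ i ≤ m let M_i(n) be the determinant of the (m−1)×(m−1) matrix obtained from the m×(m−1) matrix with entries A_{l,k}(n) = (Δ^{k−1} η_l)(n+1) (rows l = 1,…,m, columns k = 1,…,m−1) by deleting its i-th row. Let g : ℤ → ℝ be any sequence and let F_1, …, F_m : ℤ → ℝ satisfy (ΔF_i)(n) = M_i(n)·g(n) / W_m^Δ(η_1,…,η_m)(n+1) for all n. Then T_m applied to the sequence (−1)^{m−1}·Σ_{i=1}^{m} (−1)^{i+1} η_i·F_i equals g; that is, the determinant expression for T_m⁻¹ given by the first-column expansion of the inverse Wronskian matrix is a right inverse of T_m. -/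

import Mathlib

/-- Difference operator: `(Δ f) n = f (n+1) - f n`. -/
def deltaOp (f : ℤ → ℝ) : ℤ → ℝ := fun n => f (n + 1) - f n

/-- Difference-type gauge transformation operator `T_d(q) = Λ(q)∘Δ∘q⁻¹`:
`(T_d(q)f)(n) = q(n+1)·(Δ(f/q))(n)`. -/
noncomputable def Td (q f : ℤ → ℝ) : ℤ → ℝ := fun n => q (n + 1) * deltaOp (fun m => f m / q m) n

/-- Δ-Wronskian `W_k^Δ(f_1,…,f_k)(n) = det[(Δ^{i−1} f_j)(n)]_{1≤i,j≤k}`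
(here `i j : Fin k` are 0-based, so rows are `Δ^i` and columns the functions). -/
noncomputable def Wr {k : ℕ} (η : Fin k → ℤ → ℝ) (n : ℤ) : ℝ :=
  (Matrix.of fun i j : Fin k => (deltaOp^[(i : ℕ)] (η j)) n).det

/-- Iterated gauge transformation: `T_0 = id` and `T_{j+1} = T_d(T_j(η_{j+1}))∘T_j`,
where `η 0, η 1, …` are the generating sequences `η_1, η_2, …` (0-based indexing). -/
noncomputable def Titer (η : ℕ → ℤ → ℝ) : ℕ → (ℤ → ℝ) → (ℤ → ℝ)
  | 0 => id
  | j + 1 => Td (Titer η j (η j)) ∘ Titer η j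

open Finset

lemma delta_iter_eq_sum (f : ℤ → ℝ) (k : ℕ) (n : ℤ) :
    deltaOp^[k] f n = ∑ t ∈ range (k + 1), ((-1 : ℝ) ^ (k - t) * (k.choose t)) * f (n + t) := by
  have h := fwdDiff_iter_eq_sum_shift (1 : ℤ) f k n
  have he : deltaOp = fwdDiff (1 : ℤ) := rfl
  rw [he, h]
  refine Finset.sum_congr rfl fun t ht => ?_
  have ht1 : (t • (1:ℤ)) = (t:ℤ) := by simp
  rw [ht1, zsmul_eq_mul]
  push_cast
  ring

lemma delta_iter_congr {f g : ℤ → ℝ} (k : ℕ) (n : ℤ)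
    (h : ∀ t : ℕ, t ≤ k → f (n + t) = g (n + t)) :
    deltaOp^[k] f n = deltaOp^[k] g n := by
  rw [delta_iter_eq_sum, delta_iter_eq_sum]
  refine Finset.sum_congr rfl fun t ht => ?_
  rw [h t (by simpa [Nat.lt_succ_iff] using ht)]

lemma delta_iter_zero (f : ℤ → ℝ) (k : ℕ) (n : ℤ)
    (h : ∀ t : ℕ, t ≤ k → f (n + t) = 0) :
    deltaOp^[k] f n = 0 := by
  rw [delta_iter_eq_sum]
  refine Finset.sum_eq_zero fun t ht => ?_
  rw [h t (by simpa [Nat.lt_succ_iff] using ht), mul_zero]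

lemma delta_iter_last (f : ℤ → ℝ) (k : ℕ) (n : ℤ)
    (h : ∀ t : ℕ, t < k → f (n + t) = 0) :
    deltaOp^[k] f n = f (n + k) := by
  rw [delta_iter_eq_sum]
  rw [Finset.sum_eq_single k (fun t ht htne =>
      by rw [h t (by simp only [Finset.mem_range] at ht; omega), mul_zero])
    (fun hk => absurd (Finset.self_mem_range_succ k) hk)]
  simp

lemma delta_iter_sum {ι : Type*} (s : Finset ι) (c : ι → ℝ) (G : ι → ℤ → ℝ) (k : ℕ) (n : ℤ) :
    deltaOp^[k] (fun x => ∑ i ∈ s, c i * G i x) n = ∑ i ∈ s, c i * deltaOp^[k] (G i) n := by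
  rw [delta_iter_eq_sum]
  simp_rw [delta_iter_eq_sum, Finset.mul_sum]
  rw [Finset.sum_comm]
  refine Finset.sum_congr rfl fun i _ => Finset.sum_congr rfl fun t _ => by ring

lemma wr_eq_cas {k : ℕ} (ξ : Fin k → ℤ → ℝ) (n : ℤ) :
    Wr ξ n = (Matrix.of fun r c : Fin k => ξ c (n + (r : ℕ))).det := by
  classical
  set L : Matrix (Fin k) (Fin k) ℝ :=
    Matrix.of fun r t : Fin k =>
      if (t : ℕ) ≤ (r : ℕ) then (-1 : ℝ) ^ ((r : ℕ) - (t : ℕ)) * ((r : ℕ).choose t) else 0 with hL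
  have hLdet : L.det = 1 := by
    have htri : L.BlockTriangular OrderDual.toDual := by
      intro r t hrt
      have h1 : ¬ ((t : ℕ) ≤ (r : ℕ)) := by
        have : (r : ℕ) < (t : ℕ) := hrt
        omega
      simp only [hL, Matrix.of_apply, if_neg h1]
    rw [Matrix.det_of_lowerTriangular L htri]
    have : ∀ r : Fin k, L r r = 1 := by
      intro r; simp [hL]
    simp [this]
  have hmul : (Matrix.of fun i j : Fin k => (deltaOp^[(i : ℕ)] (ξ j)) n)
      = L * (Matrix.of fun r c : Fin k => ξ c (n + (r : ℕ))) := by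
    ext r c
    rw [Matrix.mul_apply]
    simp only [Matrix.of_apply, hL]
    rw [delta_iter_eq_sum]
    rw [show ∑ t : Fin k,
        (if (t : ℕ) ≤ (r : ℕ) then (-1 : ℝ) ^ ((r:ℕ) - (t:ℕ)) * (((r:ℕ)).choose t) else 0) * ξ c (n + (t:ℕ))
        = ∑ t ∈ range k,
        (if t ≤ (r : ℕ) then (-1 : ℝ) ^ ((r:ℕ) - t) * (((r:ℕ)).choose t) else 0) * ξ c (n + t) from
      Finset.sum_bij (fun t _ => (t : ℕ)) (fun t _ => by simpa using t.isLt)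
        (fun a _ b _ h => Fin.ext h)
        (fun t ht => ⟨⟨t, by simpa using ht⟩, by simp⟩) (fun t _ => rfl)]
    rw [← Finset.sum_subset (Finset.range_subset_range.mpr (Nat.succ_le_of_lt r.isLt))
      (fun t _ htn => by
        have : ¬ t ≤ (r : ℕ) := by simp only [Finset.mem_range, Nat.lt_succ_iff] at htn; omega
        simp [this])]
    refine Finset.sum_congr rfl fun t ht => ?_
    have : t ≤ (r : ℕ) := by simp only [Finset.mem_range, Nat.lt_succ_iff] at ht; exact ht
    simp [this]
  rw [Wr, hmul, Matrix.det_mul, hLdet, one_mul]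

lemma det_snoc_elast {k : ℕ} (A : Matrix (Fin (k + 1)) (Fin (k + 1)) ℝ)
    (h : ∀ r, A r (Fin.last k) = if r = Fin.last k then 1 else 0) :
    A.det = (A.submatrix Fin.castSucc Fin.castSucc).det := by
  rw [Matrix.det_succ_column A (Fin.last k)]
  rw [Finset.sum_eq_single (Fin.last k) (fun r _ hrne => by rw [h r, if_neg hrne]; ring)
    (fun hn => absurd (Finset.mem_univ _) hn)]
  rw [h (Fin.last k), if_pos rfl]
  simp only [Fin.succAbove_last, one_mul, mul_one]
  rw [← two_mul, pow_mul, neg_one_sq, one_pow, one_mul]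

noncomputable def WA (η : ℕ → ℤ → ℝ) (j : ℕ) (n : ℤ) : ℝ := Wr (fun i : Fin j => η i) n

noncomputable def WU (η : ℕ → ℤ → ℝ) (j : ℕ) (f : ℤ → ℝ) (n : ℤ) : ℝ :=
  Wr (Fin.snoc (fun i : Fin j => η i) f) n

noncomputable def Bmat (η : ℕ → ℤ → ℝ) (j : ℕ) (n : ℤ) : Matrix (Fin (j + 1)) (Fin (j + 1)) ℝ :=
  Matrix.of fun r c => if (c : ℕ) < j then deltaOp^[(r : ℕ)] (η c) n else 0

lemma Bmat_castSucc (η : ℕ → ℤ → ℝ) (j : ℕ) (n : ℤ) (r : Fin (j + 1)) (c : Fin j) :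
    Bmat η j n r (Fin.castSucc c) = deltaOp^[(r : ℕ)] (η c) n := by
  simp [Bmat, c.isLt]

lemma WU_eq (η : ℕ → ℤ → ℝ) (j : ℕ) (f : ℤ → ℝ) (n : ℤ) :
    WU η j f n
      = ((Bmat η j n).updateCol (Fin.last j) (fun r => deltaOp^[(r : ℕ)] f n)).det := by
  rw [WU, Wr]
  congr 1
  ext r c
  induction c using Fin.lastCases with
  | last =>
      rw [Matrix.of_apply, Fin.snoc_last, Matrix.updateCol_apply, if_pos rfl]
  | cast c =>
      rw [Matrix.of_apply, Fin.snoc_castSucc, Matrix.updateCol_apply,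
        if_neg (Fin.ne_last_of_lt (Fin.castSucc_lt_last c)), Bmat_castSucc]

lemma det_updateCol_finset_sum {k : ℕ} {ι : Type*} (A : Matrix (Fin k) (Fin k) ℝ)
    (p : Fin k) (s : Finset ι) (G : ι → Fin k → ℝ) :
    (A.updateCol p (fun r => ∑ i ∈ s, G i r)).det
      = ∑ i ∈ s, (A.updateCol p (G i)).det := by
  classical
  induction s using Finset.induction_on with
  | empty =>
      simp only [Finset.sum_empty]
      exact Matrix.det_eq_zero_of_column_eq_zero p (fun r => by
        rw [Matrix.updateCol_apply, if_pos rfl])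
  | insert a s' hx ih =>
      simp only [Finset.sum_insert hx]
      rw [show (fun r => G a r + ∑ i ∈ s', G i r) = (G a + fun r => ∑ i ∈ s', G i r) from rfl,
        Matrix.det_updateCol_add, ih]

lemma WU_congr (η : ℕ → ℤ → ℝ) (j : ℕ) {f g : ℤ → ℝ} (n : ℤ)
    (h : ∀ t : ℕ, t ≤ j → f (n + t) = g (n + t)) : WU η j f n = WU η j g n := by
  have hv : (fun r : Fin (j+1) => deltaOp^[(r : ℕ)] f n)
      = fun r : Fin (j+1) => deltaOp^[(r : ℕ)] g n := by
    funext r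
    exact delta_iter_congr (r : ℕ) n (fun t ht => h t (le_trans ht (Nat.lt_succ_iff.mp r.isLt)))
  rw [WU_eq, hv, ← WU_eq]

lemma WU_sum (η : ℕ → ℤ → ℝ) (j : ℕ) {ι : Type*} (s : Finset ι) (c : ι → ℝ) (G : ι → ℤ → ℝ)
    (n : ℤ) :
    WU η j (fun x => ∑ i ∈ s, c i * G i x) n = ∑ i ∈ s, c i * WU η j (G i) n := by
  rw [WU_eq]
  have hc : (fun r : Fin (j+1) => deltaOp^[(r : ℕ)] (fun x => ∑ i ∈ s, c i * G i x) n)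
      = fun r => ∑ i ∈ s, (fun i (r : Fin (j+1)) => c i * deltaOp^[(r : ℕ)] (G i) n) i r := by
    funext r; exact delta_iter_sum s c G _ n
  rw [hc, det_updateCol_finset_sum]
  refine Finset.sum_congr rfl fun i _ => ?_
  have : (fun r : Fin (j+1) => c i * deltaOp^[(r : ℕ)] (G i) n)
      = c i • (fun r : Fin (j+1) => deltaOp^[(r : ℕ)] (G i) n) := rfl
  rw [this, Matrix.det_updateCol_smul, ← WU_eq]

lemma WU_eta_lt (η : ℕ → ℤ → ℝ) (j : ℕ) (i : ℕ) (hi : i < j) (n : ℤ) :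
    WU η j (η i) n = 0 := by
  rw [WU, Wr]
  refine Matrix.det_zero_of_column_eq (i := Fin.castSucc ⟨i, hi⟩) (j := Fin.last j)
    (Fin.ne_last_of_lt (Fin.castSucc_lt_last _)) (fun r => ?_)
  rw [Matrix.of_apply, Matrix.of_apply, Fin.snoc_castSucc, Fin.snoc_last]

lemma WU_eta_last (η : ℕ → ℤ → ℝ) (j : ℕ) (n : ℤ) :
    WU η j (η j) n = WA η (j + 1) n := by
  rw [WU, WA, Wr, Wr]
  congr 1
  ext r c
  induction c using Fin.lastCases with
  | last => rw [Matrix.of_apply, Fin.snoc_last, Matrix.of_apply, Fin.val_last]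
  | cast c => rw [Matrix.of_apply, Fin.snoc_castSucc, Matrix.of_apply, Fin.coe_castSucc]

lemma WU_col_elast (η : ℕ → ℤ → ℝ) (j : ℕ) (f : ℤ → ℝ) (n : ℤ)
    (hcol : ∀ r : Fin (j + 1), deltaOp^[(r : ℕ)] f n = if (r : ℕ) = j then 1 else 0) :
    WU η j f n = WA η j n := by
  rw [WU_eq]
  rw [det_snoc_elast _ (fun r => by
    rw [Matrix.updateCol_apply, if_pos rfl, hcol r]
    congr 1
    simp [Fin.ext_iff])]
  rw [WA, Wr]
  congr 1
  ext r c
  rw [Matrix.submatrix_apply, Matrix.updateCol_apply,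
    if_neg (Fin.ne_last_of_lt (Fin.castSucc_lt_last c)), Bmat_castSucc, Matrix.of_apply,
    Fin.coe_castSucc]

lemma WU_col_zero (η : ℕ → ℤ → ℝ) (j : ℕ) (f : ℤ → ℝ) (n : ℤ)
    (hcol : ∀ r : Fin (j + 1), deltaOp^[(r : ℕ)] f n = 0) :
    WU η j f n = 0 := by
  rw [WU_eq]
  exact Matrix.det_eq_zero_of_column_eq_zero (Fin.last j) (fun r => by
    rw [Matrix.updateCol_apply, if_pos rfl, hcol r])

lemma WA_zero (η : ℕ → ℤ → ℝ) (n : ℤ) : WA η 0 n = 1 := Matrix.det_fin_zero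

lemma WU_zero (η : ℕ → ℤ → ℝ) (f : ℤ → ℝ) (n : ℤ) : WU η 0 f n = f n := by
  rw [WU, Wr, Matrix.det_fin_one]
  rw [Matrix.of_apply]
  have : (0 : Fin 1) = Fin.last 0 := rfl
  rw [this, Fin.snoc_last, Fin.val_last, Function.iterate_zero_apply]

lemma key_identity (η : ℕ → ℤ → ℝ) (j : ℕ) (n : ℤ) (hA : WA η (j + 1) n ≠ 0) (f : ℤ → ℝ) :
    WU η j f (n + 1) * WA η (j + 1) n - WA η (j + 1) (n + 1) * WU η j f n
      - WU η (j + 1) f n * WA η j (n + 1) = 0 := by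
  classical
  set δ : ℤ → ℝ := fun x => if x = n + (j : ℤ) + 1 then 1 else 0 with hδ
  -- values of the three WU's on δ
  have hδ1 : WU η j δ (n + 1) = WA η j (n + 1) := by
    refine WU_col_elast η j δ (n + 1) fun r => ?_
    rcases eq_or_lt_of_le (Nat.lt_succ_iff.mp r.isLt) with hr | hr
    · rw [if_pos hr]
      rw [delta_iter_last δ _ _ (fun t ht => by
        rw [hδ]; simp only [ite_eq_right_iff]; intro habs; exfalso; omega)]
      simp only [hδ]
      rw [if_pos (by omega : n + 1 + ((r : ℕ) : ℤ) = n + (j : ℤ) + 1)]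
    · rw [if_neg (by omega)]
      refine delta_iter_zero δ _ _ fun t ht => ?_
      rw [hδ]; simp only [ite_eq_right_iff]; intro habs; exfalso; omega
  have hδ2 : WU η j δ n = 0 := by
    refine WU_col_zero η j δ n fun r => ?_
    refine delta_iter_zero δ _ _ fun t ht => ?_
    have hrj := Nat.lt_succ_iff.mp r.isLt
    rw [hδ]; simp only [ite_eq_right_iff]; intro habs; exfalso; omega
  have hδ3 : WU η (j + 1) δ n = WA η (j + 1) n := by
    refine WU_col_elast η (j + 1) δ n fun r => ?_
    rcases eq_or_lt_of_le (Nat.lt_succ_iff.mp r.isLt) with hr | hr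
    · rw [if_pos hr]
      rw [delta_iter_last δ _ _ (fun t ht => by
        rw [hδ]; simp only [ite_eq_right_iff]; intro habs; exfalso; omega)]
      simp only [hδ]
      rw [if_pos (by omega : n + ((r : ℕ) : ℤ) = n + (j : ℤ) + 1)]
    · rw [if_neg (by omega)]
      refine delta_iter_zero δ _ _ fun t ht => ?_
      rw [hδ]; simp only [ite_eq_right_iff]; intro habs; exfalso; omega
  set gen : Fin (j + 2) → ℤ → ℝ := Fin.snoc (fun i : Fin (j + 1) => η i) δ with hgen
  set S : Matrix (Fin (j + 2)) (Fin (j + 2)) ℝ := Matrix.of fun k i => gen i (n + (k : ℕ))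
    with hS
  have hlastcol : ∀ k : Fin (j + 2), S k (Fin.last (j + 1)) = if k = Fin.last (j + 1) then 1
      else 0 := by
    intro k
    by_cases hk : k = Fin.last (j + 1)
    · rw [if_pos hk, hS, Matrix.of_apply, hgen, Fin.snoc_last]
      simp only [hδ]
      rw [if_pos (by subst hk; rw [Fin.val_last]; push_cast; ring)]
    · rw [if_neg hk, hS, Matrix.of_apply, hgen, Fin.snoc_last]
      simp only [hδ]
      have hkv : (k : ℕ) < j + 1 := Fin.val_lt_last hk
      rw [if_neg (by omega)]
  have hdetS : S.det = WA η (j + 1) n := by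
    rw [det_snoc_elast S hlastcol, WA, wr_eq_cas]
    congr 1
    ext r c
    rw [Matrix.submatrix_apply, hS, Matrix.of_apply, hgen, Fin.snoc_castSucc, Matrix.of_apply,
      Fin.coe_castSucc]
  have hunit : IsUnit S.det := by rw [hdetS]; exact hA.isUnit
  set v : Fin (j + 2) → ℝ := fun k => f (n + (k : ℕ)) with hv
  set cc : Fin (j + 2) → ℝ := S⁻¹.mulVec v with hcc
  have hmv : S.mulVec cc = v := by
    rw [hcc, Matrix.mulVec_mulVec, Matrix.mul_nonsing_inv S hunit, Matrix.one_mulVec]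
  set f' : ℤ → ℝ := fun x => ∑ i : Fin (j + 2), cc i * gen i x with hf'
  have hwin : ∀ t : ℕ, t ≤ j + 1 → f (n + t) = f' (n + t) := by
    intro t ht
    have h1 := congrFun hmv ⟨t, by omega⟩
    simp only [Matrix.mulVec, dotProduct, hv] at h1
    rw [hf']
    rw [← h1]
    refine Finset.sum_congr rfl fun i _ => ?_
    rw [hS, Matrix.of_apply, mul_comm]
  have h1 : WU η j f (n + 1) = WU η j f' (n + 1) := by
    refine WU_congr η j (n + 1) fun t ht => ?_
    have := hwin (t + 1) (by omega)
    rw [show n + 1 + (t : ℤ) = n + ((t + 1 : ℕ) : ℤ) by push_cast; ring]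
    exact this
  have h2 : WU η j f n = WU η j f' n := WU_congr η j n fun t ht => hwin t (by omega)
  have h3 : WU η (j + 1) f n = WU η (j + 1) f' n := WU_congr η (j + 1) n fun t ht => hwin t ht
  rw [h1, h2, h3, hf']
  rw [WU_sum, WU_sum, WU_sum]
  rw [Finset.sum_mul, Finset.mul_sum, Finset.sum_mul, ← Finset.sum_sub_distrib,
    ← Finset.sum_sub_distrib]
  refine Finset.sum_eq_zero fun i _ => ?_
  induction i using Fin.lastCases with
  | last =>
      rw [hgen, Fin.snoc_last, hδ1, hδ2, hδ3]
      ring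
  | cast i =>
      rw [hgen, Fin.snoc_castSucc]
      rcases eq_or_lt_of_le (Nat.lt_succ_iff.mp i.isLt) with hi | hi
      · have hηi : η (i : ℕ) = η j := by rw [hi]
        rw [hηi, WU_eta_last, WU_eta_last, WU_eta_lt η (j + 1) j (by omega)]
        ring
      · rw [WU_eta_lt η j _ hi, WU_eta_lt η j _ hi, WU_eta_lt η (j + 1) _ (by omega)]
        ring

lemma hWA_of_hW (η : ℕ → ℤ → ℝ) (m : ℕ)
    (hW : ∀ j : ℕ, 1 ≤ j → j ≤ m → ∀ n : ℤ, Wr (fun i : Fin j => η i) n ≠ 0) :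
    ∀ j : ℕ, j ≤ m → ∀ n : ℤ, WA η j n ≠ 0 := by
  intro j hj n
  cases j with
  | zero => rw [WA_zero]; exact one_ne_zero
  | succ j => exact hW (j + 1) (by omega) hj n

lemma crum (η : ℕ → ℤ → ℝ) (m : ℕ)
    (hW : ∀ j : ℕ, 1 ≤ j → j ≤ m → ∀ n : ℤ, Wr (fun i : Fin j => η i) n ≠ 0) :
    ∀ j : ℕ, j ≤ m → ∀ (f : ℤ → ℝ) (n : ℤ), Titer η j f n = WU η j f n / WA η j n := by
  have hWA := hWA_of_hW η m hW
  intro j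
  induction j with
  | zero =>
      intro _ f n
      rw [WU_zero, WA_zero, div_one]
      rfl
  | succ j ih =>
      intro hj f n
      have hj' : j ≤ m := by omega
      have ihj := ih hj'
      have ha : WA η j n ≠ 0 := hWA j hj' n
      have ha' : WA η j (n + 1) ≠ 0 := hWA j hj' (n + 1)
      have hb : WA η (j + 1) n ≠ 0 := hWA (j + 1) hj n
      have hb' : WA η (j + 1) (n + 1) ≠ 0 := hWA (j + 1) hj (n + 1)
      have hT : Titer η (j + 1) f n = Td (Titer η j (η j)) (Titer η j f) n := rfl
      rw [hT, Td]
      have hφ : ∀ x, Titer η j (η j) x = WA η (j + 1) x / WA η j x := fun x => by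
        rw [ihj (η j) x, WU_eta_last]
      simp only [deltaOp]
      rw [ihj f (n + 1), ihj f n, hφ (n + 1), hφ n]
      have key := key_identity η j n hb f
      have hw : WU η (j + 1) f n
          = (WU η j f (n + 1) * WA η (j + 1) n - WA η (j + 1) (n + 1) * WU η j f n)
            / WA η j (n + 1) := by
        rw [eq_div_iff ha']; linarith
      rw [hw]
      field_simp

lemma succAbove_val {m' : ℕ} (i : Fin (m' + 1)) (l : Fin m') :
    ((i.succAbove l : Fin (m' + 1)) : ℕ) = if (l : ℕ) < (i : ℕ) then (l : ℕ) else (l : ℕ) + 1 := by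
  by_cases h : (l : ℕ) < (i : ℕ)
  · rw [Fin.succAbove_of_castSucc_lt _ _ (by rwa [Fin.lt_iff_val_lt_val, Fin.coe_castSucc]),
      if_pos h, Fin.coe_castSucc]
  · rw [Fin.succAbove_of_le_castSucc _ _ (by rw [Fin.le_iff_val_le_val, Fin.coe_castSucc]; omega),
      if_neg h, Fin.val_succ]

lemma cofactor_sum (η : ℕ → ℤ → ℝ) (m' : ℕ) (M : ℕ → ℤ → ℝ)
    (hM : ∀ i : ℕ, i < m' + 1 → ∀ n : ℤ,
      M i n = (Matrix.of fun l k : Fin m' =>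
        (deltaOp^[(k : ℕ)] (η (if (l : ℕ) < i then (l : ℕ) else (l : ℕ) + 1))) (n + 1)).det)
    (k : ℕ) (hk : k ≤ m') (n : ℤ) :
    ∑ i ∈ range (m' + 1), (-1 : ℝ) ^ i * (deltaOp^[k] (η i)) (n + 1) * M i n
      = if k = m' then (-1 : ℝ) ^ m' * WA η (m' + 1) (n + 1) else 0 := by
  classical
  set Bk : Matrix (Fin (m' + 1)) (Fin (m' + 1)) ℝ :=
    Matrix.of fun l c => if c = 0 then (deltaOp^[k] (η l)) (n + 1)
      else (deltaOp^[(c : ℕ) - 1] (η l)) (n + 1) with hBk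
  have hsum : ∑ i ∈ range (m' + 1), (-1 : ℝ) ^ i * (deltaOp^[k] (η i)) (n + 1) * M i n
      = Bk.det := by
    rw [Matrix.det_succ_column_zero]
    rw [← Fin.sum_univ_eq_sum_range (fun i => (-1 : ℝ) ^ i * (deltaOp^[k] (η i)) (n + 1) * M i n)]
    refine Finset.sum_congr rfl fun i _ => ?_
    have h0 : Bk i 0 = (deltaOp^[k] (η i)) (n + 1) := by rw [hBk, Matrix.of_apply, if_pos rfl]
    have hminor : (Bk.submatrix i.succAbove Fin.succ).det = M (i : ℕ) n := by
      rw [hM (i : ℕ) i.isLt n]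
      congr 1
      ext l c
      rw [Matrix.submatrix_apply, hBk, Matrix.of_apply, if_neg (Fin.succ_ne_zero c),
        Matrix.of_apply]
      rw [Fin.val_succ, succAbove_val i l, Nat.add_sub_cancel]
    rw [h0, hminor]
  rw [hsum]
  by_cases hkm : k = m'
  · rw [if_pos hkm]
    subst hkm
    -- Bk is a cyclic column permutation of the Wronskian matrix
    set W : Matrix (Fin (k + 1)) (Fin (k + 1)) ℝ :=
      Matrix.of fun r c : Fin (k + 1) => (deltaOp^[(r : ℕ)] (η c)) (n + 1) with hW
    set σ : Equiv.Perm (Fin (k + 1)) := (finRotate (k + 1))⁻¹ with hσ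
    have hσ0 : σ 0 = Fin.last k := by
      apply (finRotate (k + 1)).injective
      rw [hσ, Equiv.Perm.inv_def, Equiv.apply_symm_apply, finRotate_succ_apply, Fin.last_add_one]
    have hσs : ∀ i : Fin k, σ (Fin.succ i) = Fin.castSucc i := by
      intro i
      apply (finRotate (k + 1)).injective
      rw [hσ, Equiv.Perm.inv_def, Equiv.apply_symm_apply, finRotate_succ_apply, Fin.coeSucc_eq_succ]
    have htr : Bk.transpose = W.submatrix σ id := by
      ext c l
      rw [Matrix.transpose_apply, Matrix.submatrix_apply, id]
      induction c using Fin.cases with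
      | zero =>
          rw [hBk, Matrix.of_apply, if_pos rfl, hσ0, hW, Matrix.of_apply, Fin.val_last]
      | succ i =>
          rw [hBk, Matrix.of_apply, if_neg (Fin.succ_ne_zero i), hσs i, hW, Matrix.of_apply,
            Fin.coe_castSucc, Fin.val_succ, Nat.add_sub_cancel]
    have hdet : Bk.det = ((Equiv.Perm.sign σ : ℤ) : ℝ) * W.det := by
      rw [← Matrix.det_transpose, htr, Matrix.det_permute]
    rw [hdet]
    have hsign : ((Equiv.Perm.sign σ : ℤ) : ℝ) = (-1 : ℝ) ^ k := by
      rw [hσ, Equiv.Perm.sign_inv, sign_finRotate]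
      push_cast
      ring
    rw [hsign]
    congr 1
  · rw [if_neg hkm]
    have hkm' : k + 1 < m' + 1 := by omega
    refine Matrix.det_zero_of_column_eq (i := (0 : Fin (m' + 1))) (j := ⟨k + 1, hkm'⟩)
      (fun habs => by simpa [Fin.ext_iff] using habs) (fun l => ?_)
    rw [hBk, Matrix.of_apply, Matrix.of_apply, if_pos rfl,
      if_neg (fun habs => by simpa [Fin.ext_iff] using habs)]
    simp only [Nat.add_sub_cancel]

lemma delta_h_claim (η : ℕ → ℤ → ℝ) (m' : ℕ) (M : ℕ → ℤ → ℝ) (g : ℤ → ℝ) (F : ℕ → ℤ → ℝ)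
    (hWA1 : ∀ n : ℤ, WA η (m' + 1) n ≠ 0)
    (hM : ∀ i : ℕ, i < m' + 1 → ∀ n : ℤ,
      M i n = (Matrix.of fun l k : Fin m' =>
        (deltaOp^[(k : ℕ)] (η (if (l : ℕ) < i then (l : ℕ) else (l : ℕ) + 1))) (n + 1)).det)
    (hF : ∀ i : ℕ, i < m' + 1 → ∀ n : ℤ,
      deltaOp (F i) n = M i n * g n / WA η (m' + 1) (n + 1)) :
    ∀ k : ℕ, k ≤ m' + 1 → ∀ n : ℤ,
      deltaOp^[k] (fun x => (-1 : ℝ) ^ m' * ∑ i ∈ range (m' + 1), (-1 : ℝ) ^ i * η i x * F i x) n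
        = (-1 : ℝ) ^ m' * ∑ i ∈ range (m' + 1), (-1 : ℝ) ^ i * (deltaOp^[k] (η i)) n * F i n
          + (if k = m' + 1 then g n else 0) := by
  intro k
  induction k with
  | zero =>
      intro _ n
      simp only [Function.iterate_zero_apply]
      rw [if_neg (by omega)]
      ring
  | succ k ih =>
      intro hk n
      have hk' : k ≤ m' + 1 := by omega
      have hkne : ¬ (k = m' + 1) := by omega
      rw [Function.iterate_succ_apply']
      rw [show deltaOp (deltaOp^[k]
          (fun x => (-1 : ℝ) ^ m' * ∑ i ∈ range (m' + 1), (-1 : ℝ) ^ i * η i x * F i x)) n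
        = deltaOp^[k] (fun x => (-1:ℝ)^m' * ∑ i ∈ range (m'+1), (-1:ℝ)^i * η i x * F i x) (n+1)
          - deltaOp^[k] (fun x => (-1:ℝ)^m' * ∑ i ∈ range (m'+1), (-1:ℝ)^i * η i x * F i x) n
        from rfl]
      rw [ih hk' (n + 1), ih hk' n, if_neg hkne, if_neg hkne]
      -- expand the difference
      have hexpand : ∀ i : ℕ, i < m' + 1 →
          (deltaOp^[k] (η i)) (n + 1) * F i (n + 1) - (deltaOp^[k] (η i)) n * F i n
            = (deltaOp^[k+1] (η i)) n * F i n
              + (deltaOp^[k] (η i)) (n + 1) * (M i n * g n / WA η (m' + 1) (n + 1)) := by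
        intro i hi
        rw [← hF i hi n]
        have h1 : deltaOp^[k+1] (η i) n = deltaOp^[k] (η i) (n+1) - deltaOp^[k] (η i) n := by
          rw [Function.iterate_succ_apply']; rfl
        have h2 : deltaOp (F i) n = F i (n+1) - F i n := rfl
        rw [h1, h2]
        ring
      have hsplit : ∑ i ∈ range (m' + 1), (-1:ℝ)^i * (deltaOp^[k] (η i)) (n+1) * F i (n+1)
            - ∑ i ∈ range (m' + 1), (-1:ℝ)^i * (deltaOp^[k] (η i)) n * F i n
          = ∑ i ∈ range (m' + 1), (-1:ℝ)^i * (deltaOp^[k+1] (η i)) n * F i n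
            + (∑ i ∈ range (m' + 1),
                (-1:ℝ)^i * (deltaOp^[k] (η i)) (n+1) * M i n) * (g n / WA η (m'+1) (n+1)) := by
        rw [← Finset.sum_sub_distrib, Finset.sum_mul, ← Finset.sum_add_distrib]
        refine Finset.sum_congr rfl fun i hi => ?_
        have := hexpand i (Finset.mem_range.mp hi)
        calc (-1:ℝ)^i * (deltaOp^[k] (η i)) (n+1) * F i (n+1)
              - (-1:ℝ)^i * (deltaOp^[k] (η i)) n * F i n
            = (-1:ℝ)^i * ((deltaOp^[k] (η i)) (n + 1) * F i (n + 1)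
                - (deltaOp^[k] (η i)) n * F i n) := by ring
          _ = (-1:ℝ)^i * ((deltaOp^[k+1] (η i)) n * F i n
                + (deltaOp^[k] (η i)) (n + 1) * (M i n * g n / WA η (m' + 1) (n + 1))) := by
                rw [this]
          _ = _ := by ring
      rw [add_zero, add_zero, ← mul_sub, hsplit, cofactor_sum η m' M hM k (by omega) n, mul_add]
      by_cases hkm : k = m'
      · rw [if_pos hkm, if_pos (by omega)]
        have hsq : (-1:ℝ)^m' * (-1:ℝ)^m' = 1 := by
          rw [← pow_add, ← two_mul, pow_mul, neg_one_sq, one_pow]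
        have h2 : WA η (m'+1) (n+1) * (g n / WA η (m'+1) (n+1)) = g n := by
          rw [mul_comm, div_mul_cancel₀ _ (hWA1 (n+1))]
        have h1 : (-1:ℝ)^m' * ((-1:ℝ)^m' * WA η (m'+1) (n+1) * (g n / WA η (m'+1) (n+1)))
            = g n := by
          calc (-1:ℝ)^m' * ((-1:ℝ)^m' * WA η (m'+1) (n+1) * (g n / WA η (m'+1) (n+1)))
              = ((-1:ℝ)^m' * (-1:ℝ)^m')
                * (WA η (m'+1) (n+1) * (g n / WA η (m'+1) (n+1))) := by ring
            _ = g n := by rw [hsq, h2, one_mul]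
        rw [h1]
      · rw [if_neg hkm, if_neg (by omega)]
        ring

lemma det_Bmat_elast (η : ℕ → ℤ → ℝ) (j : ℕ) (n : ℤ) :
    ((Bmat η j n).updateCol (Fin.last j)
        (fun r => if (r : ℕ) = j then (1 : ℝ) else 0)).det = WA η j n := by
  rw [det_snoc_elast _ (fun r => by
    rw [Matrix.updateCol_apply, if_pos rfl]
    congr 1
    simp [Fin.ext_iff])]
  rw [WA, Wr]
  congr 1
  ext r c
  rw [Matrix.submatrix_apply, Matrix.updateCol_apply,
    if_neg (Fin.ne_last_of_lt (Fin.castSucc_lt_last c)), Bmat_castSucc, Matrix.of_apply,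
    Fin.coe_castSucc]

theorem stmt13 (m : ℕ) (hm : 1 ≤ m) (η : ℕ → ℤ → ℝ)
    (hW : ∀ j : ℕ, 1 ≤ j → j ≤ m → ∀ n : ℤ, Wr (fun i : Fin j => η i) n ≠ 0)
    (M : ℕ → ℤ → ℝ)
    (hM : ∀ i : ℕ, i < m → ∀ n : ℤ,
      M i n = (Matrix.of fun l k : Fin (m - 1) =>
        (deltaOp^[(k : ℕ)] (η (if (l : ℕ) < i then (l : ℕ) else (l : ℕ) + 1)))
          (n + 1)).det)
    (g : ℤ → ℝ) (F : ℕ → ℤ → ℝ)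
    (hF : ∀ i : ℕ, i < m → ∀ n : ℤ,
      deltaOp (F i) n = M i n * g n / Wr (fun i : Fin m => η i) (n + 1)) :
    Titer η m
      (fun n => (-1 : ℝ) ^ (m - 1) *
        ∑ i ∈ Finset.range m, (-1 : ℝ) ^ i * η i n * F i n) = g := by
  obtain ⟨m', rfl⟩ : ∃ m', m = m' + 1 := ⟨m - 1, by omega⟩
  simp only [Nat.add_sub_cancel]
  have hM' : ∀ i : ℕ, i < m' + 1 → ∀ n : ℤ,
      M i n = (Matrix.of fun l k : Fin m' =>
        (deltaOp^[(k : ℕ)] (η (if (l : ℕ) < i then (l : ℕ) else (l : ℕ) + 1))) (n + 1)).det :=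
    fun i hi n => hM i hi n
  have hWA := hWA_of_hW η (m' + 1) hW
  have hWA1 : ∀ n : ℤ, WA η (m' + 1) n ≠ 0 := hWA (m' + 1) le_rfl
  have hF' : ∀ i : ℕ, i < m' + 1 → ∀ n : ℤ,
      deltaOp (F i) n = M i n * g n / WA η (m' + 1) (n + 1) := fun i hi n => hF i hi n
  have hclaim := delta_h_claim η m' M g F hWA1 hM' hF'
  funext n
  rw [crum η (m' + 1) hW (m' + 1) le_rfl
    (fun x => (-1 : ℝ) ^ m' * ∑ i ∈ Finset.range (m' + 1), (-1 : ℝ) ^ i * η i x * F i x) n]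
  have hWU : WU η (m' + 1)
      (fun x => (-1 : ℝ) ^ m' * ∑ i ∈ Finset.range (m' + 1), (-1 : ℝ) ^ i * η i x * F i x) n
      = g n * WA η (m' + 1) n := by
    rw [WU_eq]
    have hcol : (fun r : Fin (m' + 2) => deltaOp^[(r : ℕ)]
          (fun x => (-1 : ℝ) ^ m' * ∑ i ∈ Finset.range (m' + 1), (-1 : ℝ) ^ i * η i x * F i x) n)
        = (fun r : Fin (m' + 2) => ∑ i ∈ Finset.range (m' + 1),
            ((-1 : ℝ) ^ m' * (-1 : ℝ) ^ i * F i n) * deltaOp^[(r : ℕ)] (η i) n)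
          + (g n) • (fun r : Fin (m' + 2) => if (r : ℕ) = m' + 1 then (1 : ℝ) else 0) := by
      funext r
      simp only [Pi.add_apply, Pi.smul_apply, smul_eq_mul]
      rw [hclaim (r : ℕ) (by omega) n]
      have hs : (-1 : ℝ) ^ m' * ∑ i ∈ Finset.range (m' + 1),
            (-1 : ℝ) ^ i * deltaOp^[(r : ℕ)] (η i) n * F i n
          = ∑ i ∈ Finset.range (m' + 1),
            ((-1 : ℝ) ^ m' * (-1 : ℝ) ^ i * F i n) * deltaOp^[(r : ℕ)] (η i) n := by
        rw [Finset.mul_sum]; exact Finset.sum_congr rfl fun i _ => by ring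
      rw [hs]
      congr 1
      split_ifs <;> ring
    rw [hcol, Matrix.det_updateCol_add]
    rw [det_updateCol_finset_sum]
    have hzero : ∀ i ∈ Finset.range (m' + 1),
        ((Bmat η (m' + 1) n).updateCol (Fin.last (m' + 1))
          (fun r => ((-1 : ℝ) ^ m' * (-1 : ℝ) ^ i * F i n) * deltaOp^[(r : ℕ)] (η i) n)).det
          = 0 := by
      intro i hi
      have : (fun r : Fin (m' + 2) => ((-1 : ℝ) ^ m' * (-1 : ℝ) ^ i * F i n)
            * deltaOp^[(r : ℕ)] (η i) n)
          = ((-1 : ℝ) ^ m' * (-1 : ℝ) ^ i * F i n)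
            • (fun r : Fin (m' + 2) => deltaOp^[(r : ℕ)] (η i) n) := rfl
      rw [this, Matrix.det_updateCol_smul, ← WU_eq,
        WU_eta_lt η (m' + 1) i (Finset.mem_range.mp hi) n, mul_zero]
    rw [Finset.sum_congr rfl hzero, Finset.sum_const, smul_zero]
    rw [Matrix.det_updateCol_smul, det_Bmat_elast, zero_add]
  rw [hWU, mul_div_assoc, div_self (hWA1 n), mul_one]
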